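/- Let X be a 0-dimensional space, let P, K be compact subsets of X × ℕ^ℕ, let f : P → K be a homeomorphism, and let g be an autohomeomorphism of X with g ∘ π_X = π_X ∘ f. For x ∈ P_X = π_X(P), let Φ(x) be the set of all autohomeomorphisms h of ℕ^ℕ such that f(x, c) = (g(x), h(c)) for every c with (x, c) ∈ P. Then Φ(x) is nonempty for every x ∈ P_X. -/

import Mathlib

open Topology Set

/-- A space is *0-dimensional* if it admits a dense topological embedding into a
compact Hausdorff totally disconnected space (a compactification of covering dimension 0). -/
def ZeroDimensional (Y : Type u) [TopologicalSpace Y] : Prop :=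
  ∃ (Z : Type u) (_ : TopologicalSpace Z), CompactSpace Z ∧ T2Space Z ∧
    TotallyDisconnectedSpace Z ∧ ∃ e : Y → Z, Topology.IsEmbedding e ∧ DenseRange e

/-! ### Auxiliary material -/

/-- A bijection `ℕ ≃ ℕ × ℕ` which is `k ↦ (k, 0)` on `{0, ..., m}`. -/
lemma exists_pair_equiv (m : ℕ) : ∃ e : ℕ ≃ ℕ × ℕ, ∀ k ≤ m, e k = (k, 0) := by
  classical
  set F : Set ℕ := Set.Iic m with hF
  have hFfin : F.Finite := Set.finite_Iic m
  have hinj : Function.Injective (fun k : ℕ => (k, (0 : ℕ))) := fun a b h => congrArg Prod.fst h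
  set G : Set (ℕ × ℕ) := (fun k : ℕ => (k, (0 : ℕ))) '' F with hG
  have hGfin : G.Finite := hFfin.image _
  haveI : Infinite ↥(Fᶜ) := hFfin.infinite_compl.to_subtype
  haveI : Infinite ↥(Gᶜ) := hGfin.infinite_compl.to_subtype
  obtain ⟨ε⟩ : Nonempty (↥(Fᶜ) ≃ ↥(Gᶜ)) := nonempty_equiv_of_countable
  let eFG : ↥F ≃ ↥G := Equiv.Set.image _ F hinj
  refine ⟨(Equiv.Set.sumCompl F).symm.trans ((eFG.sumCongr ε).trans (Equiv.Set.sumCompl G)),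
    fun k hk => ?_⟩
  have hkF : k ∈ F := hk
  rw [Equiv.trans_apply, Equiv.trans_apply, Equiv.Set.sumCompl_symm_apply_of_mem hkF]
  rfl

/-- The coordinatewise swap: `sw a b` swaps `0` and `a`, fixing everything else. -/
def sw (a b : ℕ) : ℕ := if b = 0 then a else if b = a then 0 else b

lemma sw_invol (a b : ℕ) : sw a (sw a b) = b := by
  unfold sw
  by_cases h0 : b = 0
  · subst h0
    by_cases ha : a = 0 <;> simp [ha]
  · by_cases hb : b = a
    · subst hb; simp [h0]
    · simp [h0, hb]

lemma sw_zero (a : ℕ) : sw a 0 = a := by simp [sw]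

lemma sw_self (a : ℕ) : sw a a = 0 := by
  unfold sw; by_cases h : a = 0 <;> simp [h]

/-- Coordinatewise swap on `ℕ^ℕ`: an involution moving `0` to `p`. -/
def swF (p v : ℕ → ℕ) : ℕ → ℕ := fun n => sw (p n) (v n)

lemma swF_invol (p v : ℕ → ℕ) : swF p (swF p v) = v := funext fun n => sw_invol _ _

lemma swF_zero (p : ℕ → ℕ) : swF p (fun _ => 0) = p := funext fun n => sw_zero _

lemma swF_self (p : ℕ → ℕ) : swF p p = fun _ => 0 := funext fun n => sw_self _

lemma continuous_swF : Continuous (fun q : (ℕ → ℕ) × (ℕ → ℕ) => swF q.1 q.2) := by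
  apply continuous_pi
  intro n
  have h1 : Continuous (fun q : (ℕ → ℕ) × (ℕ → ℕ) => (q.1 n, q.2 n)) :=
    ((continuous_apply n).comp continuous_fst).prodMk ((continuous_apply n).comp continuous_snd)
  exact (continuous_of_discreteTopology (f := fun ab : ℕ × ℕ => sw ab.1 ab.2)).comp h1

/-- The homeomorphism `(ℕ → ℕ × ℕ) ≃ₜ (ℕ → ℕ) × (ℕ → ℕ)`. -/
def splitHomeo : (ℕ → ℕ × ℕ) ≃ₜ (ℕ → ℕ) × (ℕ → ℕ) where
  toEquiv := Equiv.arrowProdEquivProdArrow ℕ (fun _ => ℕ) (fun _ => ℕ)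
  continuous_toFun := by
    refine Continuous.prodMk ?_ ?_ <;> exact continuous_pi fun n =>
      (Continuous.comp (by continuity) (continuous_apply n))
  continuous_invFun := continuous_pi fun n =>
    ((continuous_apply n).comp continuous_fst).prodMk ((continuous_apply n).comp continuous_snd)

/-- Self-inverse homeomorphism of the square given by a continuous `ψ`, acting on the second
coordinate by the swap involution parametrized by `ψ` of the first coordinate. -/
def swapHomeo₂ (ψ : (ℕ → ℕ) → (ℕ → ℕ)) (hψ : Continuous ψ) :
    ((ℕ → ℕ) × (ℕ → ℕ)) ≃ₜ ((ℕ → ℕ) × (ℕ → ℕ)) where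
  toFun := fun q => (q.1, swF (ψ q.1) q.2)
  invFun := fun q => (q.1, swF (ψ q.1) q.2)
  left_inv := fun q => by simp [swF_invol]
  right_inv := fun q => by simp [swF_invol]
  continuous_toFun := continuous_fst.prodMk
    (continuous_swF.comp ((hψ.comp continuous_fst).prodMk continuous_snd))
  continuous_invFun := continuous_fst.prodMk
    (continuous_swF.comp ((hψ.comp continuous_fst).prodMk continuous_snd))

/-- Self-inverse homeomorphism of the square acting on the first coordinate. -/
def swapHomeo₁ (χ : (ℕ → ℕ) → (ℕ → ℕ)) (hχ : Continuous χ) :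
    ((ℕ → ℕ) × (ℕ → ℕ)) ≃ₜ ((ℕ → ℕ) × (ℕ → ℕ)) where
  toFun := fun q => (swF (χ q.2) q.1, q.2)
  invFun := fun q => (swF (χ q.2) q.1, q.2)
  left_inv := fun q => by simp [swF_invol]
  right_inv := fun q => by simp [swF_invol]
  continuous_toFun := (continuous_swF.comp
    ((hχ.comp continuous_snd).prodMk continuous_fst)).prodMk continuous_snd
  continuous_invFun := (continuous_swF.comp
    ((hχ.comp continuous_snd).prodMk continuous_fst)).prodMk continuous_snd

/-- Key extension lemma: any topological embedding of a compact subset of `ℕ^ℕ` into `ℕ^ℕ`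
extends to an autohomeomorphism of `ℕ^ℕ`. -/
theorem key_extension {A : Set (ℕ → ℕ)} (hA : IsCompact A) (φ : ↥A → (ℕ → ℕ))
    (hφ : Continuous φ) (hinj : Function.Injective φ) :
    ∃ h : (ℕ → ℕ) ≃ₜ (ℕ → ℕ), ∀ a : ↥A, h ↑a = φ a := by
  rcases A.eq_empty_or_nonempty with rfl | hne
  · exact ⟨Homeomorph.refl _, fun a => absurd a.2 (Set.notMem_empty _)⟩
  haveI : CompactSpace ↥A := isCompact_iff_compactSpace.mp hA
  haveI : Nonempty ↥A := hne.to_subtype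
  set B : Set (ℕ → ℕ) := Set.range φ with hBdef
  have hB : IsCompact B := isCompact_range hφ
  have hAc : IsClosed A := hA.isClosed
  have hBc : IsClosed B := hB.isClosed
  -- retraction onto A, giving a continuous extension ψ of φ
  obtain ⟨rA, rA_id, rA_range, rA_cont⟩ := PiNat.exists_retraction_of_isClosed hAc hne
  have hrAmem : ∀ z, rA z ∈ A := fun z => by rw [← rA_range]; exact Set.mem_range_self z
  set ψ : (ℕ → ℕ) → (ℕ → ℕ) := fun z => φ ⟨rA z, hrAmem z⟩ with hψdef
  have hψc : Continuous ψ := hφ.comp (rA_cont.subtype_mk hrAmem)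
  have hψ : ∀ a : ↥A, ψ ↑a = φ a := fun a =>
    congrArg φ (Subtype.ext (rA_id a a.2))
  -- the homeomorphism from A onto B
  have hbij : Function.Bijective (Set.rangeFactorization φ) :=
    ⟨fun a b h => hinj (congrArg Subtype.val h), Set.rangeFactorization_surjective⟩
  have hrfc : Continuous (Set.rangeFactorization φ) := hφ.subtype_mk _
  let φ' : ↥A ≃ₜ ↥B := Continuous.homeoOfEquivCompactToT2
    (f := Equiv.ofBijective (Set.rangeFactorization φ) hbij) hrfc
  have hBne : B.Nonempty := Set.range_nonempty _
  -- retraction onto B, giving a continuous extension χ of φ'.symm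
  obtain ⟨rB, rB_id, rB_range, rB_cont⟩ := PiNat.exists_retraction_of_isClosed hBc hBne
  have hrBmem : ∀ z, rB z ∈ B := fun z => by rw [← rB_range]; exact Set.mem_range_self z
  set χ : (ℕ → ℕ) → (ℕ → ℕ) := fun z => ↑(φ'.symm ⟨rB z, hrBmem z⟩) with hχdef
  have hχc : Continuous χ :=
    continuous_subtype_val.comp (φ'.symm.continuous.comp (rB_cont.subtype_mk hrBmem))
  have hχ : ∀ a : ↥A, χ (φ a) = ↑a := by
    intro a
    have h1 : rB (φ a) = φ a := rB_id _ (Set.mem_range_self a)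
    have h2 : (⟨rB (φ a), hrBmem _⟩ : ↥B) = φ' a := Subtype.ext h1
    simp only [hχdef, h2, Homeomorph.symm_apply_apply]
  -- bounds on D = A ∪ B
  set D : Set (ℕ → ℕ) := A ∪ B with hDdef
  have hD : IsCompact D := hA.union hB
  have hb : ∀ n : ℕ, ∃ m : ℕ, ∀ y ∈ D, y n ≤ m := by
    intro n
    have hfin : ((fun y : ℕ → ℕ => y n) '' D).Finite :=
      (hD.image (continuous_apply n)).finite_of_discrete
    obtain ⟨m, hm⟩ := hfin.bddAbove
    exact ⟨m, fun y hy => hm (Set.mem_image_of_mem _ hy)⟩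
  choose b hbspec using hb
  choose e he using fun n => exists_pair_equiv (b n)
  -- the homeomorphism θ : ℕ^ℕ ≃ₜ ℕ^ℕ × ℕ^ℕ with θ y = (y, 0) for y ∈ D
  let θ : (ℕ → ℕ) ≃ₜ (ℕ → ℕ) × (ℕ → ℕ) :=
    (Homeomorph.piCongrRight fun n =>
      (⟨e n, continuous_of_discreteTopology, continuous_of_discreteTopology⟩ :
        ℕ ≃ₜ ℕ × ℕ)).trans splitHomeo
  have hθ : ∀ y ∈ D, θ y = (y, fun _ => 0) := by
    intro y hy
    have : ∀ n, e n (y n) = (y n, 0) := fun n => he n (y n) (hbspec n y hy)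
    show splitHomeo (fun n => e n (y n)) = (y, fun _ => 0)
    ext n <;> simp [splitHomeo, Equiv.arrowProdEquivProdArrow, this n]
  -- assemble
  let W : ((ℕ → ℕ) × (ℕ → ℕ)) ≃ₜ ((ℕ → ℕ) × (ℕ → ℕ)) :=
    (swapHomeo₂ ψ hψc).trans ((swapHomeo₁ χ hχc).trans (Homeomorph.prodComm _ _))
  refine ⟨(θ.trans W).trans θ.symm, fun a => ?_⟩
  have haD : (a : ℕ → ℕ) ∈ D := Or.inl a.2
  have hφaD : φ a ∈ D := Or.inr (Set.mem_range_self a)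
  have step1 : swapHomeo₂ ψ hψc ((a : ℕ → ℕ), fun _ => 0) = ((a : ℕ → ℕ), φ a) := by
    simp [swapHomeo₂, swF_zero, hψ a]
  have step2 : swapHomeo₁ χ hχc ((a : ℕ → ℕ), φ a) = ((fun _ => 0 : ℕ → ℕ), φ a) := by
    simp [swapHomeo₁, hχ a, swF_self]
  calc ((θ.trans W).trans θ.symm) ↑a
      = θ.symm (W (θ ↑a)) := rfl
    _ = θ.symm (Homeomorph.prodComm _ _
          (swapHomeo₁ χ hχc (swapHomeo₂ ψ hψc (θ ↑a)))) := rfl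
    _ = θ.symm (θ (φ a)) := by
        rw [hθ _ haD, step1, step2]
        rw [hθ _ hφaD]
        rfl
    _ = φ a := θ.symm_apply_apply _

/-- In the setting of Lemma 2.1: for every `x ∈ P_X = π_X(P)`, the set `Φ(x)` of
autohomeomorphisms `h` of `ℕ^ℕ` with `f(x,c) = (g(x), h(c))` for all `c` with
`(x,c) ∈ P` is nonempty. -/
theorem stmt7 {X : Type u} [TopologicalSpace X] (hX : ZeroDimensional X)
    (P K : Set (X × (ℕ → ℕ))) (hP : IsCompact P) (hK : IsCompact K)
    (f : ↥P ≃ₜ ↥K) (g : X ≃ₜ X)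
    (hfg : ∀ p : P, g ((p : X × (ℕ → ℕ)).1) = (f p : X × (ℕ → ℕ)).1)
    (x : X) (hx : x ∈ Prod.fst '' P) :
    ∃ h : (ℕ → ℕ) ≃ₜ (ℕ → ℕ), ∀ (c : ℕ → ℕ) (hc : (x, c) ∈ P),
      (f ⟨(x, c), hc⟩ : X × (ℕ → ℕ)) = (g x, h c) := by
  -- X is Hausdorff, since it embeds in a compact Hausdorff space
  obtain ⟨Z, _, _, hT2, _, e, he, -⟩ := hX
  haveI : T2Space X := he.t2Space
  -- the slice over x is compact
  set S : Set (ℕ → ℕ) := {c | (x, c) ∈ P} with hSdef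
  have hScompact : IsCompact S := by
    have h1 : IsCompact (P ∩ (Prod.fst ⁻¹' {x})) :=
      hP.inter_right (isClosed_singleton.preimage continuous_fst)
    have h2 : S = Prod.snd '' (P ∩ (Prod.fst ⁻¹' {x})) := by
      ext c
      constructor
      · intro hc; exact ⟨(x, c), ⟨hc, rfl⟩, rfl⟩
      · rintro ⟨⟨y, c'⟩, ⟨hmem, hy⟩, rfl⟩
        simp only [Set.mem_preimage, Set.mem_singleton_iff] at hy
        subst hy
        exact hmem
    rw [h2]
    exact h1.image continuous_snd
  -- the map φ on the slice
  set φ : ↥S → (ℕ → ℕ) := fun c => (f ⟨(x, ↑c), c.2⟩ : X × (ℕ → ℕ)).2 with hφdef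
  have hφc : Continuous φ := by
    have h1 : Continuous (fun c : ↥S => (⟨(x, ↑c), c.2⟩ : ↥P)) :=
      Continuous.subtype_mk (continuous_const.prodMk continuous_subtype_val) _
    exact continuous_snd.comp (continuous_subtype_val.comp (f.continuous.comp h1))
  have hφinj : Function.Injective φ := by
    intro c c' hcc
    have hfst : ∀ d : ↥S, (f ⟨(x, ↑d), d.2⟩ : X × (ℕ → ℕ)).1 = g x := fun d =>
      (hfg ⟨(x, ↑d), d.2⟩).symm
    have : (f ⟨(x, ↑c), c.2⟩ : ↥K) = f ⟨(x, ↑c'), c'.2⟩ := by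
      apply Subtype.ext
      apply Prod.ext
      · rw [hfst c, hfst c']
      · exact hcc
    have h2 := f.injective this
    have h3 : ((x, (c : ℕ → ℕ)) : X × (ℕ → ℕ)) = (x, (c' : ℕ → ℕ)) := congrArg Subtype.val h2
    exact Subtype.ext (congrArg Prod.snd h3)
  obtain ⟨h, hh⟩ := key_extension hScompact φ hφc hφinj
  refine ⟨h, fun c hc => ?_⟩
  have h1 : h c = φ ⟨c, hc⟩ := hh ⟨c, hc⟩
  apply Prod.ext
  · exact (hfg ⟨(x, c), hc⟩).symm
  · rw [h1]
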